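/- arXiv:2202.12446 — 2 statements merged into one kernel-verified Lean document; each statement's English description precedes it below -/
import Mathlib

section
/- Let a ≥ 1 be an integer and b ≥ 0 an integer, and let μ be the measure on ℝ with density |x|^b·1_{[−1,1]}(x) with respect to Lebesgue measure. Let f(x) = x^a and let g be the density of the pushforward f_*μ with respect to Lebesgue measure. Then for y ∈ (0,1], g(y) = c·y^{(b+1−a)/a} for a constant c > 0 (c = 2/a if a is even and c = 1/a if a is odd, accounting for the two preimages ±y^{1/a} when a is even), and g(y) = 0 for y > 1; consequently g ∈ L^{1+ε}(ℝ) if and only if either (b+1)/a ≥ 1, or (b+1)/a < 1 and ε < (b+1)/(a−b−1). -/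
open MeasureTheory Set

private theorem lintegral_image_deriv {s : Set ℝ} {f f' : ℝ → ℝ} (hs : MeasurableSet s)
    (hf' : ∀ x ∈ s, HasDerivWithinAt f (f' x) s x) (hf : Set.InjOn f s) (g : ℝ → ENNReal) :
    ∫⁻ x in f '' s, g x = ∫⁻ x in s, ENNReal.ofReal |f' x| * g (f x) := by
  simpa only [ContinuousLinearMap.det_toSpanSingleton] using
    lintegral_image_eq_lintegral_abs_det_fderiv_mul volume hs
      (fun x hx => (hf' x hx).hasFDerivWithinAt) hf g

/-- Pushforward of the measure `|x|^b·1_{[-1,1]} dx` under `x ↦ x^a`: explicit density on the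
positive axis, vanishing beyond `1`, and the exact integrability exponent. -/
theorem stmt_4 (a b : ℕ) (ha : 1 ≤ a)
    (μ : Measure ℝ)
    (hμ : μ = volume.withDensity (fun x =>
      ENNReal.ofReal (Set.indicator (Set.Icc (-1 : ℝ) 1) (fun x => |x| ^ b) x)))
    (ν : Measure ℝ) (hν : ν = Measure.map (fun x : ℝ => x ^ a) μ)
    (c : ℝ) (hc : c = (if Even a then 2 else 1) / (a : ℝ))
    (g : ℝ → ℝ)
    (hg : g = Set.indicator (Set.Ioc (0 : ℝ) 1)
      (fun y => c * y ^ (((b : ℝ) + 1 - (a : ℝ)) / (a : ℝ)))) :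
    0 < c ∧
    ν.restrict (Set.Ioi (0 : ℝ)) = volume.withDensity (fun y => ENNReal.ofReal (g y)) ∧
    ν (Set.Ioi (1 : ℝ)) = 0 ∧
    (∀ ε : ℝ, 0 < ε →
      (MemLp g (ENNReal.ofReal (1 + ε)) volume ↔
        (1 ≤ ((b : ℝ) + 1) / (a : ℝ) ∨
          (((b : ℝ) + 1) / (a : ℝ) < 1 ∧ ε < ((b : ℝ) + 1) / ((a : ℝ) - (b : ℝ) - 1))))) := by
  have haR : (0 : ℝ) < a := by exact_mod_cast ha
  have ha0 : a ≠ 0 := by omega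
  have hc0 : 0 < c := by rw [hc]; split_ifs <;> positivity
  subst hg hν hμ
  refine ⟨hc0, ?_, ?_, ?_⟩
  · -- Part 2: the density on the positive axis
    set α : ℝ := ((b : ℝ) + 1 - (a : ℝ)) / (a : ℝ) with hα
    set dens : ℝ → ENNReal := fun x =>
      ENNReal.ofReal (Set.indicator (Set.Icc (-1 : ℝ) 1) (fun x => |x| ^ b) x) with hdens
    set G : ℝ → ENNReal := fun y =>
      ENNReal.ofReal (Set.indicator (Set.Ioc (0 : ℝ) 1) (fun y => c * y ^ α) y) with hG
    set κ : ℝ := if Even a then 2 else 1 with hκ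
    have hκ1 : 1 ≤ κ := by rw [hκ]; split_ifs <;> norm_num
    have hpow : Measurable (fun x : ℝ => x ^ a) := measurable_id.pow_const a
    have hdm : Measurable dens :=
      ((continuous_abs.measurable.pow_const b).indicator measurableSet_Icc).ennreal_ofReal
    ext A hA
    rw [Measure.restrict_apply hA,
      Measure.map_apply hpow (hA.inter measurableSet_Ioi),
      withDensity_apply _ (hpow (hA.inter measurableSet_Ioi)),
      withDensity_apply _ hA]
    set s : Set ℝ := (fun x : ℝ => x ^ a) ⁻¹' (A ∩ Set.Ioi 0) ∩ Set.Ioi 0 with hsdef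
    have hs : MeasurableSet s := (hpow (hA.inter measurableSet_Ioi)).inter measurableSet_Ioi
    have hspos : ∀ x ∈ s, (0:ℝ) < x := fun x hx => hx.2
    set q : ℝ → ENNReal := fun x =>
      ENNReal.ofReal (Set.indicator (Set.Ioc (0:ℝ) 1) (fun x => x ^ b) x) with hq
    have hqm : Measurable q :=
      ((measurable_id.pow_const b).indicator measurableSet_Ioc).ennreal_ofReal
    -- dens = q on s
    have hds : ∫⁻ x in s, dens x = ∫⁻ x in s, q x := by
      apply setLIntegral_congr_fun hs ?_
      intro x hx
      have hx0 : 0 < x := hspos x hx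
      rcases le_or_gt x 1 with hx1 | hx1
      · simp only [hdens, hq]
        rw [Set.indicator_of_mem (show x ∈ Set.Icc (-1:ℝ) 1 from ⟨by linarith, hx1⟩),
          Set.indicator_of_mem (show x ∈ Set.Ioc (0:ℝ) 1 from ⟨hx0, hx1⟩), abs_of_pos hx0]
      · simp only [hdens, hq]
        rw [Set.indicator_of_notMem (show x ∉ Set.Icc (-1:ℝ) 1 from fun h => by
            exact absurd h.2 (not_le.mpr hx1)),
          Set.indicator_of_notMem (show x ∉ Set.Ioc (0:ℝ) 1 from fun h => by
            exact absurd h.2 (not_le.mpr hx1))]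
    -- image of s
    have himg : (fun x : ℝ => x ^ a) '' s = A ∩ Set.Ioi 0 := by
      apply Set.Subset.antisymm
      · rintro y ⟨x, hx, rfl⟩; exact hx.1
      · intro y hy
        have hy0 : (0:ℝ) < y := hy.2
        have hxa : (y ^ ((a:ℝ)⁻¹)) ^ a = y := by
          rw [← Real.rpow_natCast (y ^ ((a:ℝ)⁻¹)) a, ← Real.rpow_mul hy0.le,
            inv_mul_cancel₀ (ne_of_gt haR), Real.rpow_one]
        exact ⟨y ^ ((a:ℝ)⁻¹), ⟨by rw [Set.mem_preimage, hxa]; exact hy,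
          Real.rpow_pos_of_pos hy0 _⟩, hxa⟩
    have hinj : Set.InjOn (fun x : ℝ => x ^ a) s :=
      (pow_left_strictMonoOn₀ ha0).injOn.mono (fun x hx => (hspos x hx).le)
    have hderiv : ∀ x ∈ s, HasDerivWithinAt (fun x : ℝ => x ^ a) ((a:ℝ) * x ^ (a-1)) s x :=
      fun x _ => (hasDerivAt_pow a x).hasDerivWithinAt
    have hcv : ∫⁻ y in A ∩ Set.Ioi 0, G y
        = ∫⁻ x in s, ENNReal.ofReal |(a:ℝ) * x ^ (a-1)| * G (x ^ a) := by
      rw [← himg]; exact lintegral_image_deriv hs hderiv hinj G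
    -- pointwise identity on s
    have hpt : ∀ x ∈ s, ENNReal.ofReal |(a:ℝ) * x ^ (a-1)| * G (x ^ a)
        = ENNReal.ofReal κ * q x := by
      intro x hx
      have hx0 : 0 < x := hspos x hx
      have hxa0 : 0 < x ^ a := pow_pos hx0 a
      rcases le_or_gt x 1 with hx1 | hx1
      · have hmem : x ^ a ∈ Set.Ioc (0:ℝ) 1 := ⟨hxa0, pow_le_one₀ hx0.le hx1⟩
        have hmem' : x ∈ Set.Ioc (0:ℝ) 1 := ⟨hx0, hx1⟩
        simp only [hG, hq]
        rw [Set.indicator_of_mem hmem, Set.indicator_of_mem hmem',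
          ← ENNReal.ofReal_mul (abs_nonneg _), ← ENNReal.ofReal_mul (by positivity)]
        congr 1
        have h1 : |(a:ℝ) * x ^ (a-1)| = (a:ℝ) * x ^ (a-1) := abs_of_pos (by positivity)
        have h2 : ((x:ℝ) ^ a) ^ α = x ^ ((b:ℝ) + 1 - a) := by
          rw [← Real.rpow_natCast x a, ← Real.rpow_mul hx0.le, hα]
          congr 1
          field_simp
        have h3 : (x:ℝ) ^ (a-1) = x ^ ((a:ℝ) - 1) := by
          rw [← Real.rpow_natCast x (a-1)]
          congr 1
          push_cast [Nat.cast_sub ha]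
          ring
        have h4 : (x:ℝ) ^ b = x ^ ((b:ℝ)) := (Real.rpow_natCast x b).symm
        rw [h1, h2, h3, h4, hc]
        have h5 : x ^ ((a:ℝ) - 1) * x ^ ((b:ℝ) + 1 - a) = x ^ ((b:ℝ)) := by
          rw [← Real.rpow_add hx0]
          congr 1
          ring
        rw [← h5]
        field_simp
      · have hmem : x ^ a ∉ Set.Ioc (0:ℝ) 1 := fun h =>
          absurd h.2 (not_le.mpr (one_lt_pow₀ hx1 ha0))
        have hmem' : x ∉ Set.Ioc (0:ℝ) 1 := fun h => absurd h.2 (not_le.mpr hx1)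
        simp only [hG, hq]
        rw [Set.indicator_of_notMem hmem, Set.indicator_of_notMem hmem']
        simp
    -- the RHS reduced to s
    have hRHS : ∫⁻ y in A, G y = ENNReal.ofReal κ * ∫⁻ x in s, q x := by
      have hF : ∫⁻ y in A, G y = ∫⁻ y in A ∩ Set.Ioi 0, G y := by
        have hGind : G = Set.indicator (Set.Ioc (0:ℝ) 1)
            (fun y => ENNReal.ofReal (c * y ^ α)) := by
          funext y
          by_cases h : y ∈ Set.Ioc (0:ℝ) 1 <;>
            simp [hG, h, Set.indicator_of_mem, Set.indicator_of_notMem]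
        rw [hGind, lintegral_indicator measurableSet_Ioc, lintegral_indicator measurableSet_Ioc,
          Measure.restrict_restrict measurableSet_Ioc,
          Measure.restrict_restrict measurableSet_Ioc]
        congr 2
        ext x
        simp only [Set.mem_inter_iff, Set.mem_Ioc, Set.mem_Ioi]
        tauto
      rw [hF, hcv, setLIntegral_congr_fun hs hpt, lintegral_const_mul _ hqm]
    rw [hRHS]
    -- the LHS: case on parity
    rcases Nat.even_or_odd a with hev | hodd
    · have hdecomp : (fun x : ℝ => x ^ a) ⁻¹' (A ∩ Set.Ioi 0) = s ∪ (Neg.neg ⁻¹' s) := by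
        ext x
        constructor
        · intro hx
          rcases lt_trichotomy x 0 with h | h | h
          · have hnp : (-x) ^ a = x ^ a := hev.neg_pow x
            exact Or.inr ⟨by simpa only [Set.mem_preimage, hnp] using hx, by simpa using h⟩
          · subst h
            have := (Set.mem_preimage.mp hx).2
            simp [zero_pow ha0] at this
          · exact Or.inl ⟨hx, h⟩
        · rintro (h | h)
          · exact h.1
          · have h1 : (-x) ^ a ∈ A ∩ Set.Ioi 0 := h.1
            rwa [Set.mem_preimage, ← hev.neg_pow]
      have hnegmeas : MeasurableSet (Neg.neg ⁻¹' s) := measurable_neg hs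
      have hdisj : Disjoint s (Neg.neg ⁻¹' s) := by
        rw [Set.disjoint_left]
        intro x hxs hxn
        have h1 : 0 < x := hspos x hxs
        have h2 : 0 < -x := hspos _ hxn
        linarith
      have hsymm : ∀ x : ℝ, dens (-x) = dens x := by
        intro x
        simp only [hdens]
        by_cases hx : x ∈ Set.Icc (-1:ℝ) 1
        · rw [Set.indicator_of_mem (show -x ∈ Set.Icc (-1:ℝ) 1 from
            ⟨by linarith [hx.2], by linarith [hx.1]⟩), Set.indicator_of_mem hx, abs_neg]
        · rw [Set.indicator_of_notMem (show -x ∉ Set.Icc (-1:ℝ) 1 from fun h =>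
            hx ⟨by linarith [h.2], by linarith [h.1]⟩), Set.indicator_of_notMem hx]
      have hnegint : ∫⁻ x in Neg.neg ⁻¹' s, dens x = ∫⁻ x in s, dens x := by
        calc ∫⁻ x in Neg.neg ⁻¹' s, dens x = ∫⁻ x in Neg.neg ⁻¹' s, dens (-x) :=
              lintegral_congr fun x => (hsymm x).symm
          _ = ∫⁻ x in s, dens x :=
              (Measure.measurePreserving_neg volume).setLIntegral_comp_preimage hs hdm
      rw [hdecomp, lintegral_union hnegmeas hdisj, hnegint, hds, hκ, if_pos hev]
      rw [show ENNReal.ofReal (2:ℝ) = 2 by norm_num, two_mul]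
    · have hdecomp : (fun x : ℝ => x ^ a) ⁻¹' (A ∩ Set.Ioi 0) = s := by
        apply Set.Subset.antisymm
        · intro x hx
          exact ⟨hx, Set.mem_Ioi.mpr ((hodd.pow_pos_iff).mp (Set.mem_Ioi.mp (Set.mem_preimage.mp hx).2))⟩
        · exact fun x hx => hx.1
      rw [hdecomp, hds, hκ, if_neg (Nat.not_even_iff_odd.mpr hodd)]
      simp
  · -- Part 3: no mass beyond 1
    have hpow : Measurable (fun x : ℝ => x ^ a) := measurable_id.pow_const a
    rw [Measure.map_apply hpow measurableSet_Ioi,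
      withDensity_apply _ (hpow measurableSet_Ioi)]
    have hzero : ∀ x ∈ (fun x : ℝ => x ^ a) ⁻¹' Set.Ioi 1,
        ENNReal.ofReal (Set.indicator (Set.Icc (-1 : ℝ) 1) (fun x => |x| ^ b) x) = 0 := by
      intro x hx
      have hx' : (1:ℝ) < x ^ a := hx
      have hnot : x ∉ Set.Icc (-1:ℝ) 1 := by
        intro hmem
        have habs : |x| ≤ 1 := abs_le.mpr ⟨hmem.1, hmem.2⟩
        have : x ^ a ≤ 1 := le_trans (le_abs_self _)
          (by rw [abs_pow]; exact pow_le_one₀ (abs_nonneg x) habs)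
        linarith
      rw [Set.indicator_of_notMem hnot, ENNReal.ofReal_zero]
    rw [setLIntegral_congr_fun (hpow measurableSet_Ioi) hzero]
    simp
  · -- Part 4: the integrability exponent
    intro ε hε
    set α : ℝ := ((b : ℝ) + 1 - (a : ℝ)) / (a : ℝ) with hα
    set g : ℝ → ℝ := Set.indicator (Set.Ioc (0 : ℝ) 1) (fun y => c * y ^ α) with hg
    have h1ε : (0:ℝ) < 1 + ε := by linarith
    set p : ENNReal := ENNReal.ofReal (1 + ε) with hp
    have hp0 : p ≠ 0 := by simp [hp, ENNReal.ofReal_eq_zero]; linarith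
    have hptop : p ≠ ⊤ := ENNReal.ofReal_ne_top
    have hpt : p.toReal = 1 + ε := ENNReal.toReal_ofReal h1ε.le
    have hgm : Measurable g := by
      rw [hg]
      exact (Measurable.const_mul (measurable_id.pow_const α) c).indicator measurableSet_Ioc
    have key : MemLp g p volume ↔ Integrable (fun y => ‖g y‖ ^ (1 + ε)) volume := by
      rw [← memLp_one_iff_integrable]
      have := memLp_norm_rpow_iff (μ := volume) (p := p) (q := p)
        hgm.aestronglyMeasurable hp0 hptop
      rw [ENNReal.div_self hp0 hptop, hpt] at this
      exact this.symm
    rw [key]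
    have hfun : (fun y => ‖g y‖ ^ (1 + ε)) =
        Set.indicator (Set.Ioc (0:ℝ) 1) (fun y => (c ^ (1+ε)) • (y ^ (α * (1 + ε)))) := by
      funext y
      by_cases hy : y ∈ Set.Ioc (0:ℝ) 1
      · rw [hg, Set.indicator_of_mem hy, Set.indicator_of_mem hy]
        have hy0 : 0 < y := hy.1
        have hrp : 0 ≤ y ^ α := (Real.rpow_pos_of_pos hy0 α).le
        rw [Real.norm_eq_abs, abs_of_nonneg (by positivity), smul_eq_mul,
          Real.mul_rpow hc0.le hrp, ← Real.rpow_mul hy0.le]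
      · rw [hg, Set.indicator_of_notMem hy, Set.indicator_of_notMem hy, norm_zero,
          Real.zero_rpow (by linarith)]
    rw [hfun, integrable_indicator_iff measurableSet_Ioc]
    have hcne : (c ^ (1+ε)) ≠ 0 := by positivity
    have hsmul : (fun y : ℝ => c ^ (1+ε) • y ^ (α * (1 + ε))) =
        (c ^ (1+ε)) • (fun y : ℝ => y ^ (α * (1 + ε))) := rfl
    rw [IntegrableOn, hsmul, integrable_smul_iff hcne, ← IntegrableOn,
      integrableOn_Ioc_iff_integrableOn_Ioo,
      intervalIntegral.integrableOn_Ioo_rpow_iff zero_lt_one]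
    have hB : (0:ℝ) < (b:ℝ) + 1 := by positivity
    have hiff : (-1 < α * (1+ε)) ↔ -(a:ℝ) < ((b:ℝ)+1-(a:ℝ))*(1+ε) := by
      rw [hα, div_mul_eq_mul_div, lt_div_iff₀ haR]
      constructor <;> intro h <;> nlinarith
    rw [hiff]
    constructor
    · intro h
      rcases le_or_gt 1 (((b:ℝ)+1)/(a:ℝ)) with hr | hr
      · exact Or.inl hr
      · refine Or.inr ⟨hr, ?_⟩
        have hba : (b:ℝ) + 1 < a := (div_lt_one haR).mp hr
        rw [show (a:ℝ) - (b:ℝ) - 1 = a - ((b:ℝ)+1) by ring, lt_div_iff₀ (by linarith)]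
        nlinarith
    · intro h
      rcases h with hr | ⟨hr, hε'⟩
      · have hba : (a:ℝ) ≤ (b:ℝ) + 1 := (one_le_div haR).mp hr
        nlinarith
      · have hba : (b:ℝ) + 1 < a := (div_lt_one haR).mp hr
        rw [show (a:ℝ) - (b:ℝ) - 1 = a - ((b:ℝ)+1) by ring, lt_div_iff₀ (by linarith)] at hε'
        nlinarith
end

section
/- Let λ₁, λ₂ ∈ (0,1) with λ₁ + λ₂ < 1. Define g_j(y) = |y|^{λ_j − 1}·1_{[−1,1]}(y) for j = 1,2. Then the convolution g₁ * g₂ satisfies (g₁*g₂)(y) ≥ c·|y|^{λ₁+λ₂−1} for all 0 < |y| ≤ 1 and some constant c > 0; consequently g₁ * g₂ ∈ L^{1+ε}(ℝ) only if ε < (λ₁+λ₂)/(1−λ₁−λ₂). -/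
open MeasureTheory

section aux

/-- Integrability of the model power-law density. -/
lemma aux_pow_integrable {l : ℝ} (hl0 : 0 < l) :
    Integrable (Set.indicator (Set.Icc (-1 : ℝ) 1) (fun y => |y| ^ (l - 1))) := by
  rw [integrable_indicator_iff measurableSet_Icc]
  have h0 : ∀ c : ℝ, 0 ≤ c →
      IntervalIntegrable (fun y : ℝ => |y| ^ (l - 1)) volume 0 c := by
    intro c hc
    rw [intervalIntegrable_iff_integrableOn_Ioc_of_le hc]
    have h1 : IntegrableOn (fun y : ℝ => y ^ (l - 1)) (Set.Ioc 0 c) := by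
      rw [← intervalIntegrable_iff_integrableOn_Ioc_of_le hc]
      exact intervalIntegral.intervalIntegrable_rpow' (by linarith)
    exact h1.congr_fun (fun x hx => by rw [abs_of_pos hx.1]) measurableSet_Ioc
  have hall : ∀ c : ℝ, IntervalIntegrable (fun y : ℝ => |y| ^ (l - 1)) volume 0 c := by
    intro c
    rcases le_total 0 c with hc | hc
    · exact h0 c hc
    · rw [IntervalIntegrable.iff_comp_neg]
      simpa using h0 (-c) (by linarith)
  have key : IntervalIntegrable (fun y : ℝ => |y| ^ (l - 1)) volume (-1) 1 :=
    (hall (-1)).symm.trans (hall 1)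
  rw [intervalIntegrable_iff_integrableOn_Ioc_of_le (by norm_num : (-1 : ℝ) ≤ 1)] at key
  rwa [integrableOn_Icc_iff_integrableOn_Ioc]

/-- bound for the indicator power-law: if `a ≤ |x|` then `g x ≤ a^(l-1)`. -/
lemma aux_pow_bound {l a : ℝ} (hl1 : l ≤ 1) (ha : 0 < a) {x : ℝ} (hx : a ≤ |x|) :
    Set.indicator (Set.Icc (-1 : ℝ) 1) (fun y => |y| ^ (l - 1)) x ≤ a ^ (l - 1) := by
  by_cases hmem : x ∈ Set.Icc (-1 : ℝ) 1
  · rw [Set.indicator_of_mem hmem]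
    exact Real.rpow_le_rpow_of_nonpos ha hx (by linarith)
  · rw [Set.indicator_of_notMem hmem]
    exact Real.rpow_nonneg ha.le _

end aux

/-- Reverse Young in the model case: the convolution of two power-law densities
`|y|^{λⱼ-1}·1_{[-1,1]}` has a singularity of exponent exactly `λ₁+λ₂-1` at the origin,
so it is in `L^{1+ε}` only for `ε < (λ₁+λ₂)/(1-λ₁-λ₂)`. -/
theorem stmt_13 (l₁ l₂ : ℝ) (hl₁ : l₁ ∈ Set.Ioo (0 : ℝ) 1) (hl₂ : l₂ ∈ Set.Ioo (0 : ℝ) 1)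
    (hsum : l₁ + l₂ < 1)
    (g₁ g₂ : ℝ → ℝ)
    (hg₁ : g₁ = Set.indicator (Set.Icc (-1 : ℝ) 1) (fun y => |y| ^ (l₁ - 1)))
    (hg₂ : g₂ = Set.indicator (Set.Icc (-1 : ℝ) 1) (fun y => |y| ^ (l₂ - 1))) :
    (∃ c : ℝ, 0 < c ∧ ∀ y : ℝ, 0 < |y| → |y| ≤ 1 →
      c * |y| ^ (l₁ + l₂ - 1) ≤ ∫ t : ℝ, g₁ (y - t) * g₂ t) ∧
    (∀ ε : ℝ, 0 < ε →
      MemLp (fun y : ℝ => ∫ t : ℝ, g₁ (y - t) * g₂ t) (ENNReal.ofReal (1 + ε)) volume →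
      ε < (l₁ + l₂) / (1 - l₁ - l₂)) := by
  obtain ⟨hl₁0, hl₁1⟩ := hl₁
  obtain ⟨hl₂0, hl₂1⟩ := hl₂
  -- basic facts
  have hg₁nn : ∀ x, 0 ≤ g₁ x := by
    intro x; rw [hg₁]
    exact Set.indicator_nonneg (fun y _ => Real.rpow_nonneg (abs_nonneg y) _) x
  have hg₂nn : ∀ x, 0 ≤ g₂ x := by
    intro x; rw [hg₂]
    exact Set.indicator_nonneg (fun y _ => Real.rpow_nonneg (abs_nonneg y) _) x
  have hg₁m : Measurable g₁ := by
    rw [hg₁]; exact (Measurable.pow_const measurable_id.abs _).indicator measurableSet_Icc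
  have hg₂m : Measurable g₂ := by
    rw [hg₂]; exact (Measurable.pow_const measurable_id.abs _).indicator measurableSet_Icc
  have hg₁i : Integrable g₁ := by rw [hg₁]; exact aux_pow_integrable hl₁0
  have hg₂i : Integrable g₂ := by rw [hg₂]; exact aux_pow_integrable hl₂0
  have hg₁e : ∀ x, g₁ (-x) = g₁ x := by
    intro x; rw [hg₁]
    by_cases hx : x ∈ Set.Icc (-1 : ℝ) 1
    · have hx' : -x ∈ Set.Icc (-1 : ℝ) 1 := by
        simp only [Set.mem_Icc] at *; constructor <;> linarith [hx.1, hx.2]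
      rw [Set.indicator_of_mem hx, Set.indicator_of_mem hx', abs_neg]
    · have hx' : -x ∉ Set.Icc (-1 : ℝ) 1 := by
        simp only [Set.mem_Icc] at *; intro h; exact hx ⟨by linarith [h.2], by linarith [h.1]⟩
      rw [Set.indicator_of_notMem hx, Set.indicator_of_notMem hx']
  have hg₂e : ∀ x, g₂ (-x) = g₂ x := by
    intro x; rw [hg₂]
    by_cases hx : x ∈ Set.Icc (-1 : ℝ) 1
    · have hx' : -x ∈ Set.Icc (-1 : ℝ) 1 := by
        simp only [Set.mem_Icc] at *; constructor <;> linarith [hx.1, hx.2]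
      rw [Set.indicator_of_mem hx, Set.indicator_of_mem hx', abs_neg]
    · have hx' : -x ∉ Set.Icc (-1 : ℝ) 1 := by
        simp only [Set.mem_Icc] at *; intro h; exact hx ⟨by linarith [h.2], by linarith [h.1]⟩
      rw [Set.indicator_of_notMem hx, Set.indicator_of_notMem hx']
  -- integrability of the pointwise convolution integrand for y ≠ 0
  have hconv_int : ∀ y : ℝ, y ≠ 0 → Integrable (fun t => g₁ (y - t) * g₂ t) := by
    intro y hy
    have h1y : Integrable (fun t => g₁ (y - t)) := by
      have := (hg₁i.comp_add_left y).comp_neg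
      simpa [sub_eq_add_neg] using this
    set a : ℝ := |y| / 2 with ha
    have ha0 : 0 < a := by
      have : 0 < |y| := abs_pos.mpr hy
      positivity
    refine Integrable.mono' ((hg₂i.const_mul (a ^ (l₁ - 1))).add
      (h1y.const_mul (a ^ (l₂ - 1)))) ?_ (ae_of_all _ ?_)
    · exact ((hg₁m.comp (measurable_const.sub measurable_id)).mul hg₂m).aestronglyMeasurable
    · intro t
      rw [Real.norm_eq_abs, abs_of_nonneg (mul_nonneg (hg₁nn _) (hg₂nn _))]
      simp only [Pi.add_apply]
      rcases le_or_gt |t| a with hta | hta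
      · have hbd : g₁ (y - t) ≤ a ^ (l₁ - 1) := by
          rw [hg₁]
          refine aux_pow_bound hl₁1.le ha0 ?_
          have : a ≤ |y| - |t| := by rw [ha]; linarith [abs_pos.mpr hy]
          calc a ≤ |y| - |t| := this
            _ ≤ |y - t| := abs_sub_abs_le_abs_sub y t
        have h1 : g₁ (y - t) * g₂ t ≤ a ^ (l₁ - 1) * g₂ t :=
          mul_le_mul_of_nonneg_right hbd (hg₂nn t)
        have h2 : 0 ≤ a ^ (l₂ - 1) * g₁ (y - t) :=
          mul_nonneg (Real.rpow_nonneg ha0.le _) (hg₁nn _)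
        linarith
      · have hbd : g₂ t ≤ a ^ (l₂ - 1) := by
          rw [hg₂]; exact aux_pow_bound hl₂1.le ha0 hta.le
        have h1 : g₁ (y - t) * g₂ t ≤ g₁ (y - t) * a ^ (l₂ - 1) :=
          mul_le_mul_of_nonneg_left hbd (hg₁nn _)
        have h2 : 0 ≤ a ^ (l₁ - 1) * g₂ t :=
          mul_nonneg (Real.rpow_nonneg ha0.le _) (hg₂nn _)
        linarith
  -- the constant
  set c : ℝ := (l₂ * (2 : ℝ) ^ l₂)⁻¹ with hc_def
  have hc : 0 < c := by
    have h2 : (0 : ℝ) < (2 : ℝ) ^ l₂ := Real.rpow_pos_of_pos (by norm_num) _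
    positivity
  -- main bound for positive y
  have key : ∀ y : ℝ, 0 < y → y ≤ 1 →
      c * y ^ (l₁ + l₂ - 1) ≤ ∫ t : ℝ, g₁ (y - t) * g₂ t := by
    intro y hy hy1
    have hint := hconv_int y hy.ne'
    have hhalf : (0 : ℝ) ≤ y / 2 := by linarith
    have hstep1 : ∫ t in Set.Ioc 0 (y / 2), g₁ (y - t) * g₂ t ≤ ∫ t : ℝ, g₁ (y - t) * g₂ t :=
      setIntegral_le_integral hint (ae_of_all _ fun t => mul_nonneg (hg₁nn _) (hg₂nn _))
    have hIntPow : IntegrableOn (fun t : ℝ => y ^ (l₁ - 1) * t ^ (l₂ - 1))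
        (Set.Ioc 0 (y / 2)) := by
      have : IntegrableOn (fun t : ℝ => t ^ (l₂ - 1)) (Set.Ioc 0 (y / 2)) := by
        rw [← intervalIntegrable_iff_integrableOn_Ioc_of_le hhalf]
        exact intervalIntegral.intervalIntegrable_rpow' (by linarith)
      exact this.const_mul _
    have hstep2 : ∫ t in Set.Ioc 0 (y / 2), y ^ (l₁ - 1) * t ^ (l₂ - 1) ≤
        ∫ t in Set.Ioc 0 (y / 2), g₁ (y - t) * g₂ t := by
      refine setIntegral_mono_on hIntPow hint.integrableOn measurableSet_Ioc ?_
      intro t ht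
      obtain ⟨ht0, hty⟩ := ht
      have hyt : 0 < y - t := by linarith [half_lt_self hy]
      have hyt1 : y - t ≤ 1 := by linarith
      have hg₂t : g₂ t = t ^ (l₂ - 1) := by
        rw [hg₂, Set.indicator_of_mem (by constructor <;> [linarith; linarith]),
          abs_of_pos ht0]
      have hg₁t : g₁ (y - t) = (y - t) ^ (l₁ - 1) := by
        rw [hg₁, Set.indicator_of_mem (by constructor <;> [linarith; linarith]),
          abs_of_pos hyt]
      rw [hg₂t, hg₁t]
      refine mul_le_mul_of_nonneg_right ?_ (Real.rpow_nonneg ht0.le _)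
      exact Real.rpow_le_rpow_of_nonpos hyt (by linarith) (by linarith)
    have hval : ∫ t in Set.Ioc 0 (y / 2), y ^ (l₁ - 1) * t ^ (l₂ - 1) =
        y ^ (l₁ - 1) * ((y / 2) ^ l₂ / l₂) := by
      rw [integral_const_mul]
      congr 1
      rw [← intervalIntegral.integral_of_le hhalf,
        integral_rpow (Or.inl (by linarith))]
      have he : l₂ - 1 + 1 = l₂ := by ring
      rw [he, Real.zero_rpow hl₂0.ne']
      ring
    have hfinal : c * y ^ (l₁ + l₂ - 1) = y ^ (l₁ - 1) * ((y / 2) ^ l₂ / l₂) := by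
      have h2pos : (0 : ℝ) < (2 : ℝ) ^ l₂ := Real.rpow_pos_of_pos (by norm_num) _
      rw [Real.div_rpow hy.le (by norm_num)]
      have hsplit : y ^ (l₁ + l₂ - 1) = y ^ (l₁ - 1) * y ^ l₂ := by
        rw [← Real.rpow_add hy]; ring_nf
      rw [hsplit, hc_def]
      field_simp
    linarith [hstep1, hstep2, hval ▸ hstep2]
  -- extend to negative y (by symmetry)
  have main : ∀ y : ℝ, 0 < |y| → |y| ≤ 1 →
      c * |y| ^ (l₁ + l₂ - 1) ≤ ∫ t : ℝ, g₁ (y - t) * g₂ t := by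
    intro y hy0 hy1
    rcases lt_trichotomy y 0 with hy | hy | hy
    · have heq : (∫ t : ℝ, g₁ (y - t) * g₂ t) = ∫ t : ℝ, g₁ (-y - t) * g₂ t := by
        calc (∫ t : ℝ, g₁ (y - t) * g₂ t)
            = ∫ t : ℝ, g₁ (-y - (-t)) * g₂ (-t) := by
              congr 1; funext t
              rw [hg₂e, show -y - -t = -(y - t) by ring, hg₁e]
          _ = ∫ t : ℝ, g₁ (-y - t) * g₂ t :=
              integral_neg_eq_self (fun t : ℝ => g₁ (-y - t) * g₂ t) volume
      rw [heq, abs_of_neg hy]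
      exact key (-y) (by linarith) (by rw [abs_of_neg hy] at hy1; linarith)
    · simp [hy] at hy0
    · rw [abs_of_pos hy]
      exact key y hy (by rwa [abs_of_pos hy] at hy1)
  refine ⟨⟨c, hc, main⟩, ?_⟩
  -- Part 2
  intro ε hε hmem
  by_contra hcon
  push_neg at hcon
  set lam : ℝ := l₁ + l₂ with hlam
  have hlam0 : 0 < lam := by positivity
  have hlam1 : lam < 1 := hsum
  set p : ℝ := 1 + ε with hp_def
  have hp1 : 1 ≤ p := by linarith
  have hp0 : 0 < p := by linarith
  have hexp : (lam - 1) * p ≤ -1 := by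
    rw [div_le_iff₀ (by linarith : (0:ℝ) < 1 - l₁ - l₂)] at hcon
    nlinarith [hlam]
  have htoReal : (ENNReal.ofReal p).toReal = p := ENNReal.toReal_ofReal hp0.le
  have hInt : Integrable (fun y : ℝ => |∫ t : ℝ, g₁ (y - t) * g₂ t| ^ p) := by
    have := hmem.integrable_norm_rpow (by simp [hp0]) ENNReal.ofReal_ne_top
    simpa [htoReal, Real.norm_eq_abs] using this
  have hIntOn : IntegrableOn (fun y : ℝ => c ^ p * y ^ ((lam - 1) * p)) (Set.Ioo 0 1) := by
    refine Integrable.mono hInt.integrableOn ?_ ?_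
    · exact (((Measurable.pow_const measurable_id _).const_mul _)).aestronglyMeasurable
    · rw [ae_restrict_iff' measurableSet_Ioo]
      refine ae_of_all _ fun y hy => ?_
      obtain ⟨hy0, hy1⟩ := hy
      have habs : |y| = y := abs_of_pos hy0
      have hbd := main y (by rw [habs]; exact hy0) (by rw [habs]; exact hy1.le)
      rw [habs] at hbd
      have hlhs : c ^ p * y ^ ((lam - 1) * p) = (c * y ^ (lam - 1)) ^ p := by
        rw [Real.mul_rpow hc.le (Real.rpow_nonneg hy0.le _), Real.rpow_mul hy0.le]
      have h1 : (0 : ℝ) ≤ c * y ^ (lam - 1) :=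
        mul_nonneg hc.le (Real.rpow_nonneg hy0.le _)
      have h2 : c * y ^ (lam - 1) ≤ |∫ t : ℝ, g₁ (y - t) * g₂ t| :=
        le_trans hbd (le_abs_self _)
      rw [Real.norm_eq_abs, abs_of_nonneg (by rw [hlhs]; exact Real.rpow_nonneg h1 _)]
      rw [Real.norm_eq_abs, abs_of_nonneg (Real.rpow_nonneg (abs_nonneg _) _)]
      rw [hlhs]
      exact Real.rpow_le_rpow h1 h2 hp0.le
  have hIntOn' : IntegrableOn (fun y : ℝ => y ^ ((lam - 1) * p)) (Set.Ioo 0 1) := by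
    have hcp : (0 : ℝ) < c ^ p := Real.rpow_pos_of_pos hc _
    have := hIntOn.const_mul (c ^ p)⁻¹
    exact (by simpa [← mul_assoc, inv_mul_cancel₀ hcp.ne'] using this :
      Integrable (fun y : ℝ => y ^ ((lam - 1) * p)) (volume.restrict (Set.Ioo 0 1)))
  have := (intervalIntegral.integrableOn_Ioo_rpow_iff one_pos).mp hIntOn'
  linarith
end
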